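/- Let F ⊂ ℝⁿ be a nonempty closed bounded convex set with 0 in its interior, a ∈ ℝⁿ, μ > 0. Define φ(x) = ρ_F(x - a) and φ_μ(x) = sup{⟨x - a, u⟩ - (μ/2)‖u‖² : u ∈ F°}. Then φ_μ(x) = (1/(2μ))‖x - a‖² - (μ/2)[d((x-a)/μ; F°)]², φ_μ is differentiable with ∇φ_μ(x) = P((x-a)/μ; F°), and φ_μ(x) ≤ φ(x) ≤ φ_μ(x) + (μ/2)‖F°‖², where ‖F°‖ = sup{‖u‖ : u ∈ F°}. -/

import Mathlib

noncomputable section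

/-- `ℝⁿ`. -/
abbrev E (n : ℕ) := EuclideanSpace ℝ (Fin n)

/-- Polar set `F° = {y : ⟨x, y⟩ ≤ 1 for all x ∈ F}`. -/
def polarSet {n : ℕ} (F : Set (E n)) : Set (E n) :=
  {y | ∀ x ∈ F, (inner ℝ x y : ℝ) ≤ 1}

/-- `p` is the Euclidean projection of `x` onto `K`. -/
def IsProjection {n : ℕ} (K : Set (E n)) (x p : E n) : Prop :=
  p ∈ K ∧ ∀ w ∈ K, ‖x - p‖ ≤ ‖x - w‖

open Metric Set

lemma zero_mem_polar {n : ℕ} (F : Set (E n)) : (0 : E n) ∈ polarSet F := by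
  intro x hx
  simp [inner_zero_right]

lemma polar_convex {n : ℕ} (F : Set (E n)) : Convex ℝ (polarSet F) := by
  intro y hy z hz s t hs ht hst x hx
  have h1 := hy x hx
  have h2 := hz x hx
  rw [inner_add_right, real_inner_smul_right, real_inner_smul_right]
  calc s * (inner ℝ x y : ℝ) + t * inner ℝ x z ≤ s * 1 + t * 1 := by
        gcongr
    _ = 1 := by linarith

lemma polar_closed {n : ℕ} (F : Set (E n)) : IsClosed (polarSet F) := by
  have : polarSet F = ⋂ x ∈ F, {y : E n | (inner ℝ x y : ℝ) ≤ 1} := by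
    ext y; simp [polarSet]
  rw [this]
  refine isClosed_biInter fun x _ => isClosed_le ?_ continuous_const
  exact continuous_const.inner continuous_id

lemma polar_norm_le {n : ℕ} (F : Set (E n)) (h0 : (0 : E n) ∈ interior F) :
    ∃ R : ℝ, 0 ≤ R ∧ ∀ u ∈ polarSet F, ‖u‖ ≤ R := by
  obtain ⟨ε, hε, hball⟩ := Metric.mem_nhds_iff.1 (mem_interior_iff_mem_nhds.1 h0)
  refine ⟨2 / ε, by positivity, fun u hu => ?_⟩
  rcases eq_or_ne u 0 with rfl | hu0
  · simp; positivity
  · have hun : 0 < ‖u‖ := norm_pos_iff.2 hu0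
    have hx : (ε / 2 / ‖u‖) • u ∈ F := by
      apply hball
      rw [mem_ball_zero_iff, norm_smul, Real.norm_of_nonneg (by positivity)]
      rw [div_mul_cancel₀ _ hun.ne']
      linarith
    have := hu _ hx
    rw [real_inner_smul_left, real_inner_self_eq_norm_sq] at this
    rw [div_mul_eq_mul_div, div_le_iff₀ hun] at this
    rw [le_div_iff₀ hε]
    nlinarith [hun, mul_pos hun hε]

lemma polar_compact {n : ℕ} (F : Set (E n)) (h0 : (0 : E n) ∈ interior F) :
    IsCompact (polarSet F) := by
  obtain ⟨R, _, hR⟩ := polar_norm_le F h0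
  rw [Metric.isCompact_iff_isClosed_bounded]
  exact ⟨polar_closed F, isBounded_iff_forall_norm_le.2 ⟨R, hR⟩⟩

lemma proj_exists {n : ℕ} {K : Set (E n)} (hK : IsCompact K) (hne : K.Nonempty) (y : E n) :
    ∃ p, IsProjection K y p := by
  obtain ⟨p, hp, hmin⟩ := hK.exists_isMinOn hne
    (Continuous.continuousOn (f := fun w => ‖y - w‖) (by fun_prop))
  exact ⟨p, hp, fun w hw => hmin hw⟩

lemma proj_char {n : ℕ} {K : Set (E n)} (hK : Convex ℝ K) {y p : E n}
    (h : IsProjection K y p) : ∀ w ∈ K, (inner ℝ (y - p) (w - p) : ℝ) ≤ 0 := by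
  haveI : Nonempty K := ⟨⟨p, h.1⟩⟩
  have hbdd : BddBelow (Set.range fun w : K => ‖y - w‖) :=
    ⟨0, by rintro _ ⟨w, rfl⟩; exact norm_nonneg _⟩
  have hmin : ‖y - p‖ = ⨅ w : K, ‖y - w‖ :=
    le_antisymm (le_ciInf fun w => h.2 w w.2) (ciInf_le hbdd ⟨p, h.1⟩)
  exact (norm_eq_iInf_iff_real_inner_le_zero hK h.1).1 hmin

lemma proj_lipschitz {n : ℕ} {K : Set (E n)} (hK : Convex ℝ K) {y₁ y₂ p₁ p₂ : E n}
    (h₁ : IsProjection K y₁ p₁) (h₂ : IsProjection K y₂ p₂) : ‖p₁ - p₂‖ ≤ ‖y₁ - y₂‖ := by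
  have A := proj_char hK h₁ p₂ h₂.1
  have B := proj_char hK h₂ p₁ h₁.1
  have key : ‖p₁ - p₂‖ ^ 2 ≤ (inner ℝ (y₁ - y₂) (p₁ - p₂) : ℝ) := by
    have e1 : (inner ℝ (y₁ - y₂) (p₁ - p₂) : ℝ) - ‖p₁ - p₂‖ ^ 2
        = -(inner ℝ (y₁ - p₁) (p₂ - p₁) : ℝ) - (inner ℝ (y₂ - p₂) (p₁ - p₂) : ℝ) := by
      rw [← real_inner_self_eq_norm_sq]
      have : y₁ - y₂ - (p₁ - p₂) = (y₁ - p₁) - (y₂ - p₂) := by abel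
      rw [← inner_sub_left, this, inner_sub_left, ← neg_sub p₂ p₁, inner_neg_right]
    linarith
  have hcs : (inner ℝ (y₁ - y₂) (p₁ - p₂) : ℝ) ≤ ‖y₁ - y₂‖ * ‖p₁ - p₂‖ :=
    real_inner_le_norm _ _
  nlinarith [norm_nonneg (p₁ - p₂), norm_nonneg (y₁ - y₂)]

lemma quad_id {n : ℕ} {μ : ℝ} (hμ : 0 < μ) (z u : E n) :
    (inner ℝ z u : ℝ) - μ / 2 * ‖u‖ ^ 2
      = 1 / (2 * μ) * ‖z‖ ^ 2 - μ / 2 * ‖(1 / μ) • z - u‖ ^ 2 := by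
  rw [norm_sub_sq_real, norm_smul, real_inner_smul_left]
  rw [Real.norm_of_nonneg (by positivity : (0:ℝ) ≤ 1 / μ)]
  field_simp
  ring

lemma inner_le_gauge {n : ℕ} {F : Set (E n)} (h0 : (0 : E n) ∈ interior F)
    {u : E n} (hu : u ∈ polarSet F) (z : E n) : (inner ℝ z u : ℝ) ≤ gauge F z := by
  have habs : Absorbent ℝ F := absorbent_nhds_zero (mem_interior_iff_mem_nhds.1 h0)
  refine le_of_forall_gt_imp_ge_of_dense fun t ht => ?_
  obtain ⟨r, hr0, hrt, y, hy, rfl⟩ := exists_lt_of_gauge_lt habs ht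
  rw [real_inner_smul_left]
  calc r * (inner ℝ y u : ℝ) ≤ r * 1 := by
        exact mul_le_mul_of_nonneg_left (hu y hy) hr0.le
    _ ≤ t := by linarith

lemma gauge_le_sup {n : ℕ} {F : Set (E n)} (hcl : IsClosed F) (hcv : Convex ℝ F)
    (h0 : (0 : E n) ∈ interior F) (z : E n)
    (hbdd : BddAbove ((fun u => (inner ℝ z u : ℝ)) '' polarSet F)) :
    gauge F z ≤ sSup ((fun u => (inner ℝ z u : ℝ)) '' polarSet F) := by
  set S := sSup ((fun u => (inner ℝ z u : ℝ)) '' polarSet F) with hS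
  have hS0 : 0 ≤ S := by
    have h0' : (inner ℝ z (0 : E n) : ℝ) ≤ S :=
      le_csSup hbdd ⟨0, zero_mem_polar F, rfl⟩
    simpa using h0'
  by_contra hcon
  push_neg at hcon
  obtain ⟨c, hc1, hc2⟩ := exists_between hcon
  have hc0 : 0 < c := lt_of_le_of_lt hS0 hc1
  have hznF : (1 / c) • z ∉ F := by
    intro hmem
    have h1 : gauge F ((1 / c) • z) ≤ 1 := gauge_le_one_of_mem hmem
    rw [gauge_smul_of_nonneg (by positivity : (0:ℝ) ≤ 1 / c), smul_eq_mul] at h1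
    have : gauge F z ≤ c := by
      rw [div_mul_eq_mul_div, one_mul, div_le_one hc0] at h1
      exact h1
    linarith
  obtain ⟨f, t, hft, htz⟩ := geometric_hahn_banach_closed_point hcv hcl hznF
  obtain ⟨v, rfl⟩ := (InnerProductSpace.toDual ℝ (E n)).surjective f
  simp only [InnerProductSpace.toDual_apply_apply] at hft htz
  have ht0 : 0 < t := by
    have h00 := hft 0 (interior_subset h0)
    simpa using h00
  have huK : t⁻¹ • v ∈ polarSet F := by
    intro x hx
    rw [real_inner_smul_right]
    have h2 : (inner ℝ x v : ℝ) < t := by rw [real_inner_comm]; exact hft x hx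
    calc t⁻¹ * (inner ℝ x v : ℝ) ≤ t⁻¹ * t :=
          mul_le_mul_of_nonneg_left h2.le (by positivity)
      _ = 1 := inv_mul_cancel₀ ht0.ne'
  have hle : (inner ℝ z (t⁻¹ • v) : ℝ) ≤ S := le_csSup hbdd ⟨_, huK, rfl⟩
  rw [real_inner_smul_right, real_inner_comm] at hle
  rw [real_inner_smul_right] at htz
  -- htz : t < 1/c * inner ℝ v z
  have hvz : c * t < (inner ℝ v z : ℝ) := by
    have h3 := mul_lt_mul_of_pos_left htz hc0
    rwa [← mul_assoc, mul_one_div, div_self hc0.ne', one_mul] at h3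
  have : c < t⁻¹ * (inner ℝ v z : ℝ) := by
    rw [lt_inv_mul_iff₀ ht0]
    linarith [hvz]
  linarith

theorem nesterov_smoothing_of_gauge {n : ℕ} (F : Set (E n))
    (hne : F.Nonempty) (hcl : IsClosed F) (hbd : Bornology.IsBounded F)
    (hcv : Convex ℝ F) (h0 : (0 : E n) ∈ interior F)
    (a : E n) (μ : ℝ) (hμ : 0 < μ)
    (φ φμ : E n → ℝ)
    (hφ : φ = fun x => gauge F (x - a))
    (hφμ : φμ = fun x =>
      sSup ((fun u => (inner ℝ (x - a) u : ℝ) - μ / 2 * ‖u‖ ^ 2) '' polarSet F)) :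
    (∀ x, φμ x = 1 / (2 * μ) * ‖x - a‖ ^ 2
        - μ / 2 * (Metric.infDist ((1 / μ) • (x - a)) (polarSet F)) ^ 2) ∧
    (∀ x p : E n, IsProjection (polarSet F) ((1 / μ) • (x - a)) p →
        HasGradientAt φμ p x) ∧
    (∀ x, φμ x ≤ φ x ∧
        φ x ≤ φμ x + μ / 2 * (sSup ((fun u => ‖u‖) '' polarSet F)) ^ 2) := by
  have hφμ' : ∀ x, φμ x
      = sSup ((fun u => (inner ℝ (x - a) u : ℝ) - μ / 2 * ‖u‖ ^ 2) '' polarSet F) := by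
    intro x; rw [hφμ]
  have hφ' : ∀ x, φ x = gauge F (x - a) := by intro x; rw [hφ]
  have hKne : (polarSet F).Nonempty := ⟨0, zero_mem_polar F⟩
  have hKcv : Convex ℝ (polarSet F) := polar_convex F
  have hKcp : IsCompact (polarSet F) := polar_compact F h0
  have hbdd : ∀ x : E n,
      BddAbove ((fun u => (inner ℝ (x - a) u : ℝ) - μ / 2 * ‖u‖ ^ 2) '' polarSet F) := by
    intro x
    exact (hKcp.image ((continuous_const.inner continuous_id).sub (continuous_const.mul (continuous_norm.pow 2)))).bddAbove
  have hbddI : ∀ z : E n, BddAbove ((fun u => (inner ℝ z u : ℝ)) '' polarSet F) := by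
    intro z
    exact (hKcp.image (continuous_const.inner continuous_id)).bddAbove
  have hval : ∀ x p, IsProjection (polarSet F) ((1 / μ) • (x - a)) p →
      φμ x = (inner ℝ (x - a) p : ℝ) - μ / 2 * ‖p‖ ^ 2 := by
    intro x p hp
    rw [hφμ' x]
    refine IsGreatest.csSup_eq ⟨⟨p, hp.1, rfl⟩, ?_⟩
    rintro _ ⟨u, hu, rfl⟩
    dsimp only
    rw [quad_id hμ (x - a) u, quad_id hμ (x - a) p]
    have h1 : ‖(1 / μ) • (x - a) - p‖ ≤ ‖(1 / μ) • (x - a) - u‖ := hp.2 u hu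
    have h2 : ‖(1 / μ) • (x - a) - p‖ ^ 2 ≤ ‖(1 / μ) • (x - a) - u‖ ^ 2 :=
      pow_le_pow_left₀ (norm_nonneg _) h1 2
    nlinarith [hμ]
  have hdist : ∀ x p, IsProjection (polarSet F) ((1 / μ) • (x - a)) p →
      Metric.infDist ((1 / μ) • (x - a)) (polarSet F) = ‖(1 / μ) • (x - a) - p‖ := by
    intro x p hp
    refine le_antisymm ?_ ?_
    · simpa [dist_eq_norm] using Metric.infDist_le_dist_of_mem hp.1
    · haveI : Nonempty (polarSet F) := hKne.to_subtype
      rw [Metric.infDist_eq_iInf]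
      refine le_ciInf fun w => ?_
      simpa [dist_eq_norm] using hp.2 w w.2
  refine ⟨?_, ?_, ?_⟩
  · -- Part 1
    intro x
    obtain ⟨p, hp⟩ := proj_exists hKcp hKne ((1 / μ) • (x - a))
    rw [hval x p hp, hdist x p hp, quad_id hμ (x - a) p]
  · -- Part 2
    intro x p hp
    have hx := hval x p hp
    -- two-sided bounds
    have hD1 : ∀ y, 0 ≤ φμ y - φμ x - (inner ℝ p (y - x) : ℝ) := by
      intro y
      have hlow : (inner ℝ (y - a) p : ℝ) - μ / 2 * ‖p‖ ^ 2 ≤ φμ y := by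
        rw [hφμ' y]; exact le_csSup (hbdd y) ⟨p, hp.1, rfl⟩
      have e1 : (inner ℝ (y - a) p : ℝ) - (inner ℝ (x - a) p : ℝ) = inner ℝ (y - x) p := by
        rw [← inner_sub_left]
        congr 1
        abel
      have e2 : (inner ℝ (y - x) p : ℝ) = inner ℝ p (y - x) := real_inner_comm _ _
      rw [hx]
      linarith
    have hD2 : ∀ y, φμ y - φμ x - (inner ℝ p (y - x) : ℝ) ≤ 1 / μ * ‖y - x‖ ^ 2 := by
      intro y
      obtain ⟨q, hq⟩ := proj_exists hKcp hKne ((1 / μ) • (y - a))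
      have hy := hval y q hq
      have hup : (inner ℝ (x - a) q : ℝ) - μ / 2 * ‖q‖ ^ 2 ≤ φμ x := by
        rw [hφμ' x]; exact le_csSup (hbdd x) ⟨q, hq.1, rfl⟩
      have hqp : ‖q - p‖ ≤ 1 / μ * ‖y - x‖ := by
        calc ‖q - p‖ ≤ ‖(1 / μ) • (y - a) - (1 / μ) • (x - a)‖ := proj_lipschitz hKcv hq hp
          _ = 1 / μ * ‖y - x‖ := by
              rw [← smul_sub, norm_smul, Real.norm_of_nonneg (by positivity : (0:ℝ) ≤ 1 / μ)]
              congr 2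
              abel
      have e : (inner ℝ (y - a) q : ℝ) - (inner ℝ (x - a) q : ℝ) - (inner ℝ p (y - x) : ℝ)
          = inner ℝ (y - x) (q - p) := by
        have e3 : y - a - (x - a) = y - x := by abel
        rw [real_inner_comm (y - x) p, ← inner_sub_left, e3, ← inner_sub_right]
      have hcs : (inner ℝ (y - x) (q - p) : ℝ) ≤ ‖y - x‖ * ‖q - p‖ := real_inner_le_norm _ _
      have hfin : ‖y - x‖ * ‖q - p‖ ≤ 1 / μ * ‖y - x‖ ^ 2 := by
        calc ‖y - x‖ * ‖q - p‖ ≤ ‖y - x‖ * (1 / μ * ‖y - x‖) :=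
              mul_le_mul_of_nonneg_left hqp (norm_nonneg _)
          _ = 1 / μ * ‖y - x‖ ^ 2 := by ring
      rw [hy]
      linarith
    rw [hasGradientAt_iff_isLittleO, Asymptotics.isLittleO_iff]
    intro c hc
    rw [Metric.eventually_nhds_iff]
    refine ⟨c * μ, by positivity, fun {y} hy => ?_⟩
    rw [dist_eq_norm] at hy
    have h1 := hD1 y
    have h2 := hD2 y
    have hn : ‖φμ y - φμ x - (inner ℝ p (y - x) : ℝ)‖ = φμ y - φμ x - (inner ℝ p (y - x) : ℝ) :=
      Real.norm_of_nonneg h1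
    rw [hn]
    have h3 : ‖y - x‖ ^ 2 ≤ c * μ * ‖y - x‖ := by
      rw [sq]
      exact mul_le_mul_of_nonneg_right hy.le (norm_nonneg _)
    calc φμ y - φμ x - (inner ℝ p (y - x) : ℝ) ≤ 1 / μ * ‖y - x‖ ^ 2 := h2
      _ ≤ 1 / μ * (c * μ * ‖y - x‖) := by
          exact mul_le_mul_of_nonneg_left h3 (by positivity)
      _ = c * ‖y - x‖ := by field_simp
  · -- Part 3
    intro x
    constructor
    · rw [hφμ' x, hφ' x]
      refine csSup_le ⟨_, ⟨0, zero_mem_polar F, rfl⟩⟩ ?_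
      rintro _ ⟨u, hu, rfl⟩
      exact (sub_le_self _ (by positivity)).trans (inner_le_gauge h0 hu (x - a))
    · rw [hφ' x]
      have hMb : BddAbove ((fun u : E n => ‖u‖) '' polarSet F) :=
        (hKcp.image continuous_norm).bddAbove
      have hM : ∀ u ∈ polarSet F, ‖u‖ ≤ sSup ((fun u : E n => ‖u‖) '' polarSet F) :=
        fun u hu => le_csSup hMb ⟨u, hu, rfl⟩
      refine le_trans (gauge_le_sup hcl hcv h0 (x - a) (hbddI _)) ?_
      refine csSup_le ⟨_, ⟨0, zero_mem_polar F, rfl⟩⟩ ?_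
      rintro _ ⟨u, hu, rfl⟩
      have h1 : (inner ℝ (x - a) u : ℝ) - μ / 2 * ‖u‖ ^ 2 ≤ φμ x := by
        rw [hφμ' x]; exact le_csSup (hbdd x) ⟨u, hu, rfl⟩
      have h2 : ‖u‖ ^ 2 ≤ (sSup ((fun u : E n => ‖u‖) '' polarSet F)) ^ 2 :=
        pow_le_pow_left₀ (norm_nonneg u) (hM u hu) 2
      nlinarith [hμ]
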